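/- Let G be the time-invariant dynamic Bayesian network DAG of the environment. In G, the previous-slice latent component g_{j,t-1} is neither a descendant of g_{i,t} nor equal to it, and if c^{g→g}_{i,j} = 0 then every path in G between g_{j,t-1} and g_{i,t} is blocked by the conditioning set consisting of the remaining previous-slice latent components g_{\{1,…,d\}∖\{j\}, t-1} and the action a_{t-1}; that is, this set d-separates g_{j,t-1} from g_{i,t} whenever the edge g_{j,t-1} → g_{i,t} is absent. -/

import Mathlib

open Relation

/-- Nodes of the time-invariant dynamic Bayesian network: latent state
components `g_{i,t}`, actions `a_t`, and rewards `r_t`. -/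
inductive DBNNode (d : ℕ) : Type where
  | latent (i : Fin d) (t : ℕ)
  | action (t : ℕ)
  | reward (t : ℕ)
deriving DecidableEq

/-- The fixed binary structural masks of the DBN.  `cgg i j = true` encodes the
edge `g_{j,t-1} → g_{i,t}`, `cag i` the edge `a_{t-1} → g_{i,t}`, `cgr i` the
edge `g_{i,t-1} → r_t`, and `car` the edge `a_{t-1} → r_t`. -/
structure DBNMasks (d : ℕ) where
  cgg : Fin d → Fin d → Bool
  cag : Fin d → Bool
  cgr : Fin d → Bool
  car : Bool

/-- The directed edges of the time-invariant DBN graph `G`. -/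
def DBNEdge {d : ℕ} (c : DBNMasks d) : DBNNode d → DBNNode d → Prop
  | .latent j t, .latent i t' => t' = t + 1 ∧ c.cgg i j = true
  | .action t, .latent i t' => t' = t + 1 ∧ c.cag i = true
  | .latent i t, .reward t' => t' = t + 1 ∧ c.cgr i = true
  | .action t, .reward t' => t' = t + 1 ∧ c.car = true
  | _, _ => False

/-- Undirected adjacency induced by a directed edge relation. -/
def Adj {V : Type*} (E : V → V → Prop) (x y : V) : Prop := E x y ∨ E y x

/-- `p` is a (simple, undirected) path in the graph with edge relation `E`:
consecutive nodes are adjacent and no node repeats. -/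
def IsPathList {V : Type*} (E : V → V → Prop) (p : List V) : Prop :=
  p.Chain' (Adj E) ∧ p.Nodup

/-- A path `p` is blocked by the conditioning set `Z`: it contains a
chain `u → m → v` (in either direction) or a fork `u ← m → v` with middle
node `m ∈ Z`, or a collider `u → m ← v` with `m ∉ Z` and no descendant of
`m` in `Z`. -/
def BlockedBy {V : Type*} (E : V → V → Prop) (Z : Set V) (p : List V) : Prop :=
  ∃ u m v : V, [u, m, v] <:+: p ∧
    ((((E u m ∧ E m v) ∨ (E v m ∧ E m u) ∨ (E m u ∧ E m v)) ∧ m ∈ Z) ∨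
      ((E u m ∧ E v m) ∧ m ∉ Z ∧ ∀ w : V, Relation.TransGen E m w → w ∉ Z))

/-- `Z` d-separates `X` from `Y` in the graph with edge relation `E`: every
path between a node of `X` and a node of `Y` is blocked by `Z`. -/
def DSep {V : Type*} (E : V → V → Prop) (X Y Z : Set V) : Prop :=
  ∀ x ∈ X, ∀ y ∈ Y, ∀ p : List V,
    IsPathList E p → p.head? = some x → p.getLast? = some y → BlockedBy E Z p

/-- The joint distribution (represented abstractly by its ternary conditional
independence relation `CI X Y Z`, "X ⫫ Y given Z") satisfies the global Markov
condition w.r.t. the graph: d-separation implies conditional independence. -/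
def GlobalMarkov {V : Type*} (E : V → V → Prop)
    (CI : Set V → Set V → Set V → Prop) : Prop :=
  ∀ X Y Z : Set V, Disjoint X Y → Disjoint X Z → Disjoint Y Z →
    DSep E X Y Z → CI X Y Z

/-- The joint distribution is faithful to the graph: every conditional
independence corresponds to a d-separation. -/
def FaithfulTo {V : Type*} (E : V → V → Prop)
    (CI : Set V → Set V → Set V → Prop) : Prop :=
  ∀ X Y Z : Set V, Disjoint X Y → Disjoint X Z → Disjoint Y Z →
    CI X Y Z → DSep E X Y Z

/-- `g_{i,t} ∈ g_t^min` iff `c_i^{g→r} = 1` or `g_{i,t}` has a directed path in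
`G` to a future reward `r_{t+k}` (some `k > 0`) passing through other latent
state components. -/
def InMinSet {d : ℕ} (c : DBNMasks d) (i : Fin d) (t : ℕ) : Prop :=
  c.cgr i = true ∨
    ∃ k : ℕ, 0 < k ∧ ∃ (j : Fin d) (s : ℕ),
      Relation.TransGen (DBNEdge c) (DBNNode.latent i t) (DBNNode.latent j s) ∧
      Relation.TransGen (DBNEdge c) (DBNNode.latent j s) (DBNNode.reward (t + k))

/-- The minimal latent state set `g_t^min`, as a set of nodes of `G`. -/
def MinSet {d : ℕ} (c : DBNMasks d) (t : ℕ) : Set (DBNNode d) :=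
  {n | ∃ i : Fin d, n = DBNNode.latent i t ∧ InMinSet c i t}

namespace DsepAux

variable {d : ℕ} {c : DBNMasks d}

/-- The time slice of a node. -/
def nodeT {d : ℕ} : DBNNode d → ℕ
  | .latent _ t => t
  | .action t => t
  | .reward t => t

lemma edge_time {x y : DBNNode d} (h : DBNEdge c x y) : nodeT y = nodeT x + 1 := by
  cases x <;> cases y <;> simp_all [DBNEdge, nodeT]

lemma transGen_time {x y : DBNNode d} (h : Relation.TransGen (DBNEdge c) x y) :
    nodeT x < nodeT y := by
  induction h with
  | single h => rw [edge_time h]; omega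
  | tail _ h ih => have := edge_time h; omega

lemma reward_no_out {s : ℕ} {y : DBNNode d} (h : DBNEdge c (.reward s) y) : False := by
  cases y <;> simp_all [DBNEdge]

lemma infix_of_get {V : Type*} (p : List V) (k : ℕ) (h : k + 2 < p.length) :
    [p.get ⟨k, by omega⟩, p.get ⟨k + 1, by omega⟩, p.get ⟨k + 2, h⟩] <:+: p := by
  refine ⟨p.take k, p.drop (k + 3), ?_⟩
  have h1 := List.drop_eq_getElem_cons (l := p) (i := k) (by omega)
  have h2 := List.drop_eq_getElem_cons (l := p) (i := k + 1) (by omega)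
  have h3 := List.drop_eq_getElem_cons (l := p) (i := k + 2) (by omega)
  conv_rhs => rw [← List.take_append_drop k p, h1, h2, h3]
  simp

end DsepAux

/-- In the DBN graph `G`, the previous-slice latent component `g_{j,t-1}` is
neither a descendant of `g_{i,t}` nor equal to it; and if `c^{g→g}_{i,j} = 0`,
then the set consisting of the remaining previous-slice latent components and
the action `a_{t-1}` d-separates `g_{j,t-1}` from `g_{i,t}`. -/
theorem dsep_of_absent_edge (d : ℕ) (c : DBNMasks d) (i j : Fin d) (t : ℕ) :
    ¬ Relation.TransGen (DBNEdge c) (DBNNode.latent i (t + 1)) (DBNNode.latent j t) ∧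
    DBNNode.latent j t ≠ DBNNode.latent i (t + 1) ∧
    (c.cgg i j = false →
      DSep (DBNEdge c) {DBNNode.latent j t} {DBNNode.latent i (t + 1)}
        ({n : DBNNode d | ∃ j' : Fin d, j' ≠ j ∧ n = DBNNode.latent j' t} ∪
          {DBNNode.action t})) := by
  classical
  open DsepAux in
  refine ⟨?_, ?_, ?_⟩
  · intro h
    have := transGen_time h
    simp [nodeT] at this
  · intro h
    simp only [DBNNode.latent.injEq] at h
    omega
  · intro hc x hx y hy p hp hhead hlast
    simp only [Set.mem_singleton_iff] at hx hy
    subst hx; subst hy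
    obtain ⟨hchain, hnodup⟩ := hp
    have hne : p ≠ [] := by rintro rfl; simp at hhead
    have hlen : 0 < p.length := List.length_pos_iff.mpr hne
    set n := p.length with hn
    set Z : Set (DBNNode d) :=
      ({n : DBNNode d | ∃ j' : Fin d, j' ≠ j ∧ n = DBNNode.latent j' t} ∪
        {DBNNode.action t}) with hZ
    have hZtime : ∀ z ∈ Z, nodeT z = t := by
      rintro z (⟨j', -, rfl⟩ | hz)
      · rfl
      · simp only [Set.mem_singleton_iff] at hz; subst hz; rfl
    -- index access
    set g : ℕ → DBNNode d := fun k => p.getD k (DBNNode.reward 0) with hgdef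
    have hget : ∀ (k : ℕ) (h : k < n), g k = p.get ⟨k, h⟩ := fun k h =>
      List.getD_eq_get p _ ⟨k, h⟩
    have hadj : ∀ k, k < n - 1 → Adj (DBNEdge c) (g k) (g (k + 1)) := by
      intro k hk
      rw [hget k (by omega), hget (k + 1) (by omega)]
      exact List.isChain_iff_getElem.mp hchain k (by omega)
    have hinj : ∀ k l, k < n → l < n → g k = g l → k = l := by
      intro k l hk hl hkl
      rw [hget k hk, hget l hl] at hkl
      simpa using List.nodup_iff_injective_get.mp hnodup hkl
    have hg0 : g 0 = DBNNode.latent j t := by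
      rw [hget 0 hlen, List.get_mk_zero]
      rw [List.head?_eq_head hne] at hhead
      exact Option.some_injective _ hhead
    have hglast : g (n - 1) = DBNNode.latent i (t + 1) := by
      rw [hget (n - 1) (by omega), List.get_eq_getElem, ← List.getLast_eq_getElem hne]
      rw [List.getLast?_eq_getLast hne] at hlast
      exact Option.some_injective _ hlast
    -- a helper to build blocked triples
    have hblock : ∀ k, k + 2 < n →
        ((((DBNEdge c (g k) (g (k+1)) ∧ DBNEdge c (g (k+1)) (g (k+2))) ∨
            (DBNEdge c (g (k+2)) (g (k+1)) ∧ DBNEdge c (g (k+1)) (g k)) ∨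
            (DBNEdge c (g (k+1)) (g k) ∧ DBNEdge c (g (k+1)) (g (k+2)))) ∧ g (k+1) ∈ Z) ∨
          ((DBNEdge c (g k) (g (k+1)) ∧ DBNEdge c (g (k+2)) (g (k+1))) ∧ g (k+1) ∉ Z ∧
            ∀ w, Relation.TransGen (DBNEdge c) (g (k+1)) w → w ∉ Z)) →
        BlockedBy (DBNEdge c) Z p := by
      intro k hk hcond
      refine ⟨g k, g (k+1), g (k+2), ?_, hcond⟩
      rw [hget k (by omega), hget (k+1) (by omega), hget (k+2) (by omega)]
      exact infix_of_get p k hk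
    -- length at least 2
    have hn2 : 2 ≤ n := by
      rcases Nat.lt_or_ge n 2 with h | h
      · exfalso
        have h1 : n = 1 := by omega
        have := hg0.symm.trans (h1 ▸ hglast)
        simp at this
      · exact h
    -- length at least 3
    have hn3 : 3 ≤ n := by
      rcases Nat.lt_or_ge n 3 with h | h
      · exfalso
        have h2 : n = 2 := by omega
        have := hadj 0 (by omega)
        rw [hg0, show (0:ℕ)+1 = n-1 by omega, hglast] at this
        rcases this with h' | h'
        · rw [show DBNEdge c (DBNNode.latent j t) (DBNNode.latent i (t+1)) =
            (t + 1 = t + 1 ∧ c.cgg i j = true) from rfl] at h'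
          rw [hc] at h'; simp at h'
        · have := edge_time h'; simp only [nodeT] at this; omega
      · exact h
    -- the last index at time ≤ t
    set Q : ℕ → Prop := fun k => k < n ∧ nodeT (g k) ≤ t with hQdef
    have hQ0 : Q 0 := ⟨hlen, by rw [hg0]; exact le_rfl⟩
    set K := Nat.findGreatest Q (n - 1) with hKdef
    have hQK : Q K := Nat.findGreatest_spec (Nat.zero_le _) hQ0
    have hQlast : ¬ Q (n - 1) := by
      rintro ⟨-, h⟩; rw [hglast] at h; simp [nodeT] at h
    have hKle : K ≤ n - 1 := Nat.findGreatest_le _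
    have hKlt : K < n - 1 := lt_of_le_of_ne hKle (fun h => hQlast (h ▸ hQK))
    have hnotQ : ∀ k, K < k → k ≤ n - 1 → ¬ Q k :=
      fun k h1 h2 => Nat.findGreatest_is_greatest h1 h2
    have hK1 : t + 1 ≤ nodeT (g (K + 1)) := by
      have := hnotQ (K + 1) (by omega) (by omega)
      simp only [hQdef, not_and, not_le] at this
      exact this (by omega)
    have hEK : DBNEdge c (g K) (g (K + 1)) := by
      rcases hadj K hKlt with h | h
      · exact h
      · exfalso; have := edge_time h; omega
    have hTK : nodeT (g K) = t := by
      have := edge_time hEK; omega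
    have hTK1 : nodeT (g (K + 1)) = t + 1 := by
      have := edge_time hEK; omega
    rcases Nat.eq_zero_or_pos K with hK0 | hKpos
    · -- all nodes after the head are at time ≥ t + 1 : find the first collider
      have habove : ∀ k, 1 ≤ k → k ≤ n - 1 → t + 1 ≤ nodeT (g k) := by
        intro k h1 h2
        have := hnotQ k (by omega) h2
        simp only [hQdef, not_and, not_le] at this
        exact this (by omega)
      have hex : ∃ r, (1 ≤ r ∧ r < n - 1 ∧ DBNEdge c (g (r + 1)) (g r)) := by
        by_contra hno
        push_neg at hno
        have hforward : ∀ k, k < n - 1 → DBNEdge c (g k) (g (k + 1)) := by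
          intro k hk
          rcases Nat.eq_zero_or_pos k with rfl | hk1
          · rw [hK0] at hEK; exact hEK
          · rcases hadj k hk with h | h
            · exact h
            · exact absurd h (hno k hk1 hk)
        have htime : ∀ k, k ≤ n - 1 → nodeT (g k) = t + k := by
          intro k
          induction k with
          | zero => intro _; rw [hg0]; rfl
          | succ m ih =>
            intro hm
            have := edge_time (hforward m (by omega))
            have := ih (by omega)
            omega
        have := htime (n - 1) le_rfl
        rw [hglast] at this
        simp only [nodeT] at this
        omega
      set r := Nat.find hex with hrdef
      obtain ⟨hr1, hrlt, hrback⟩ : 1 ≤ r ∧ r < n - 1 ∧ DBNEdge c (g (r + 1)) (g r) :=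
        Nat.find_spec hex
      obtain ⟨r', hr'⟩ : ∃ r', r = r' + 1 := ⟨r - 1, by omega⟩
      have hrfor : DBNEdge c (g r') (g (r' + 1)) := by
        rcases Nat.eq_zero_or_pos r' with h0 | hpos
        · subst h0
          rw [hK0] at hEK
          exact hEK
        · rcases hadj r' (by omega) with h | h
          · exact h
          · exfalso
            have hlt : r' < r := by omega
            exact Nat.find_min hex hlt ⟨hpos, by omega, h⟩
      rw [hr'] at hrback hrlt
      refine hblock r' (by omega) (Or.inr ⟨⟨?_, ?_⟩, ?_, ?_⟩)
      · exact hrfor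
      · exact hrback
      · intro hmem
        have := hZtime _ hmem
        have := habove (r' + 1) (by omega) (by omega)
        omega
      · intro w hw hmem
        have := transGen_time hw
        have := hZtime _ hmem
        have := habove (r' + 1) (by omega) (by omega)
        omega
    · -- K ≥ 1 : g K is a non-collider in Z
      have hKne0 : g K ≠ g 0 := fun h => by
        have := hinj K 0 (by omega) hlen h; omega
      have hmZ : g K ∈ Z := by
        rcases hgK : g K with ⟨k, s⟩ | s | s
        · have hs : s = t := by rw [← hTK, hgK]; rfl
          subst hs
          left
          refine ⟨k, ?_, rfl⟩
          intro hkj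
          exact hKne0 (by rw [hgK, hg0, hkj])
        · have hs : s = t := by rw [← hTK, hgK]; rfl
          subst hs
          right; rfl
        · exfalso
          rw [hgK] at hEK
          exact reward_no_out hEK
      obtain ⟨K', hK'⟩ : ∃ K', K = K' + 1 := ⟨K - 1, by omega⟩
      rw [hK'] at hEK hmZ hKlt
      refine hblock K' (by omega) (Or.inl ⟨?_, hmZ⟩)
      rcases hadj K' (by omega) with h | h
      · exact Or.inl ⟨h, hEK⟩
      · exact Or.inr (Or.inr ⟨h, hEK⟩)
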